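/- (Inequality (aint) of Appendix A.) Let k ≥ 0 and let (c, ψ) be an unstable mode, with c_r = Re c. Then for every real number α, ∫_{−L/2}^{L/2} q(y)·(U(y) − 2c_r + α)/|U(y) − c|² · |ψ(y)|² dy = ∫_{−L/2}^{L/2} ( |ψ′(y)|² + (k² + 1/L_d²)|ψ(y)|² ) dy ≥ (κ₀² + k²) ∫_{−L/2}^{L/2} |ψ(y)|² dy. -/

import Mathlib

open Set

noncomputable section

/-- An unstable mode for wavenumber `k`: a pair `(c, ψ)` (with derivative data `ψ', ψ''`)
with `Im c ≠ 0`, `ψ` twice continuously differentiable on `[-L/2, L/2]`, not identically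
zero, vanishing at the boundary, and satisfying the eigenvalue equation. -/
def IsUnstableMode (L Ld k : ℝ) (U q : ℝ → ℝ) (c : ℂ) (ψ ψ' ψ'' : ℝ → ℂ) : Prop :=
  c.im ≠ 0 ∧
  (∀ y ∈ Icc (-L/2) (L/2), HasDerivAt ψ (ψ' y) y) ∧
  (∀ y ∈ Icc (-L/2) (L/2), HasDerivAt ψ' (ψ'' y) y) ∧
  ContinuousOn ψ'' (Icc (-L/2) (L/2)) ∧
  (∃ y ∈ Icc (-L/2) (L/2), ψ y ≠ 0) ∧
  ψ (-L/2) = 0 ∧ ψ (L/2) = 0 ∧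
  ∀ y ∈ Icc (-L/2) (L/2),
    ψ'' y - ((k^2 + 1/Ld^2 : ℝ) : ℂ) * ψ y + ((q y : ℂ) / ((U y : ℂ) - c)) * ψ y = 0


open MeasureTheory intervalIntegral in
set_option maxHeartbeats 1000000 in
lemma wirtinger_aux (b : ℝ) (hb : 0 < b) (ψ ψ' : ℝ → ℂ)
    (hd : ∀ y ∈ Icc (-b) b, HasDerivAt ψ (ψ' y) y)
    (hc' : ContinuousOn ψ' (Icc (-b) b))
    (h0 : ψ (-b) = 0) (h1 : ψ b = 0) :
    (Real.pi / (2*b))^2 * ∫ y in (-b)..b, Complex.normSq (ψ y)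
      ≤ ∫ y in (-b)..b, Complex.normSq (ψ' y) := by
  set κ : ℝ := Real.pi / (2*b) with hκdef
  have hκ : 0 < κ := div_pos Real.pi_pos (by linarith)
  have hκb : κ * b = Real.pi / 2 := by rw [hκdef]; field_simp
  have hcψ : ContinuousOn ψ (Icc (-b) b) := fun y hy =>
    (hd y hy).continuousAt.continuousWithinAt
  set f : ℝ → ℝ := fun y => Complex.normSq (ψ' y) - κ^2 * Complex.normSq (ψ y) with hfdef
  have hfc : ContinuousOn f (Icc (-b) b) :=
    (Complex.continuous_normSq.comp_continuousOn hc').sub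
      (continuousOn_const.mul (Complex.continuous_normSq.comp_continuousOn hcψ))
  obtain ⟨C, hC⟩ := isCompact_Icc.exists_bound_of_continuousOn hfc
  have hC0 : 0 ≤ C := le_trans (norm_nonneg _) (hC (-b) ⟨le_refl _, by linarith⟩)
  obtain ⟨M, hM⟩ := isCompact_Icc.exists_bound_of_continuousOn hc'
  have hM0 : 0 ≤ M := le_trans (norm_nonneg _) (hM (-b) ⟨le_refl _, by linarith⟩)
  have hψbound : ∀ y ∈ Icc (-b) b, Complex.normSq (ψ y) ≤ M^2 * (b - |y|)^2 := by
    intro y hy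
    have hmvt : ∀ x ∈ Icc (-b) b, ∀ z ∈ Icc (-b) b, ‖ψ z - ψ x‖ ≤ M * ‖z - x‖ := fun x hx z hz =>
      (convex_Icc (-b) b).norm_image_sub_le_of_norm_hasDerivWithin_le
        (fun u hu => (hd u hu).hasDerivWithinAt) (fun u hu => hM u hu) hx hz
    have hn : ‖ψ y‖ ≤ M * (b - |y|) := by
      rcases le_or_gt 0 y with hy0 | hy0
      · have h := hmvt b ⟨by linarith, le_refl _⟩ y hy
        rw [h1, sub_zero] at h
        have he : ‖y - b‖ = b - |y| := by
          rw [Real.norm_eq_abs, _root_.abs_of_nonpos (by linarith [hy.2]), _root_.abs_of_nonneg hy0]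
          ring
        rwa [he] at h
      · have h := hmvt (-b) ⟨le_refl _, by linarith⟩ y hy
        rw [h0, sub_zero] at h
        have he : ‖y - -b‖ = b - |y| := by
          rw [Real.norm_eq_abs, _root_.abs_of_nonneg (by linarith [hy.1]), _root_.abs_of_neg hy0]
          ring
        rwa [he] at h
    calc Complex.normSq (ψ y) = ‖ψ y‖^2 := by
          rw [Complex.normSq_eq_norm_sq]
      _ ≤ (M * (b - |y|))^2 := pow_le_pow_left₀ (norm_nonneg _) hn 2
      _ = M^2 * (b - |y|)^2 := by ring
  have hint : ∀ s t : ℝ, s ∈ Icc (-b) b → t ∈ Icc (-b) b → IntervalIntegrable f volume s t := by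
    intro s t hs ht
    exact (hfc.mono (Set.uIcc_subset_Icc hs ht)).intervalIntegrable
  have key : ∀ δ : ℝ, 0 < δ → δ < b → -(2*C + 2*M^2) * δ ≤ ∫ y in (-b)..b, f y := by
    intro δ hδ0 hδb
    set a : ℝ := b - δ with hadef
    have ha0 : 0 < a := by rw [hadef]; linarith
    have hab : a < b := by rw [hadef]; linarith
    have haa : -a ≤ a := by linarith
    have hIcc : Icc (-a) a ⊆ Icc (-b) b := Icc_subset_Icc (by linarith) (by linarith)
    set T : ℝ → ℝ := fun y => κ * Real.tan (κ * y) with hTdef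
    set N : ℝ → ℝ := fun y => Complex.normSq (ψ y) with hNdef
    set R : ℝ → ℝ := fun y =>
      (ψ' y * (starRingEnd ℂ) (ψ y) + ψ y * (starRingEnd ℂ) (ψ' y)).re with hRdef
    set B : ℝ → ℝ := fun y => T y * N y with hBdef
    set B' : ℝ → ℝ := fun y => κ^2 / Real.cos (κ * y)^2 * N y + T y * R y with hB'def
    have hcos : ∀ y ∈ Icc (-a) a, 0 < Real.cos (κ * y) := by
      intro y hy
      apply Real.cos_pos_of_mem_Ioo
      constructor
      · have he : -(Real.pi/2) = κ * (-b) := by rw [mul_neg, hκb]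
        rw [he]
        exact mul_lt_mul_of_pos_left (by linarith [hy.1]) hκ
      · have he : (Real.pi/2) = κ * b := hκb.symm
        rw [he]
        exact mul_lt_mul_of_pos_left (by linarith [hy.2]) hκ
    have hNderiv : ∀ y ∈ Icc (-b) b, HasDerivAt N (R y) y := by
      intro y hy
      have heq : N = fun x => (ψ x * (starRingEnd ℂ) (ψ x)).re := by
        funext x
        rw [hNdef]
        simp [Complex.mul_conj]
      rw [heq]
      have hs : HasDerivAt (fun x => (starRingEnd ℂ) (ψ x)) ((starRingEnd ℂ) (ψ' y)) y := by
        simpa using (hd y hy).star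
      have h1' : HasDerivAt (fun x => ψ x * (starRingEnd ℂ) (ψ x))
          (ψ' y * (starRingEnd ℂ) (ψ y) + ψ y * (starRingEnd ℂ) (ψ' y)) y := (hd y hy).mul hs
      exact Complex.reCLM.hasFDerivAt.comp_hasDerivAt y h1'
    have hBderiv : ∀ y ∈ Icc (-a) a, HasDerivAt B (B' y) y := by
      intro y hy
      have hinner : HasDerivAt (fun x : ℝ => κ * x) κ y := by
        simpa using (hasDerivAt_id y).const_mul κ
      have htan : HasDerivAt (fun x => Real.tan (κ * x)) ((1 / Real.cos (κ * y)^2) * κ) y := by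
        exact (Real.hasDerivAt_tan (hcos y hy).ne').comp y hinner
      have hT : HasDerivAt T (κ^2 / Real.cos (κ * y)^2) y := by
        have h := htan.const_mul κ
        rw [show κ * (1 / Real.cos (κ * y)^2 * κ) = κ^2 / Real.cos (κ * y)^2 by ring] at h
        exact h
      exact hT.mul (hNderiv y (hIcc hy))
    have hpt : ∀ y ∈ Icc (-a) a, -B' y ≤ f y := by
      intro y hy
      have hid : f y + B' y = Complex.normSq (ψ' y + (T y : ℂ) * ψ y) := by
        have hexp : Complex.normSq (ψ' y + (T y : ℂ) * ψ y)
            = Complex.normSq (ψ' y) + T y * R y + (T y)^2 * N y := by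
          simp only [Complex.normSq_apply, hRdef, hNdef, Complex.add_re, Complex.add_im,
            Complex.mul_re, Complex.mul_im, Complex.conj_re, Complex.conj_im,
            Complex.ofReal_re, Complex.ofReal_im]
          ring
        have hcne := (hcos y hy).ne'
        have htansq : κ^2 / Real.cos (κ*y)^2 = κ^2 + (T y)^2 := by
          have hTv : T y = κ * Real.tan (κ * y) := rfl
          rw [hTv, Real.tan_eq_sin_div_cos]
          have hs := Real.sin_sq_add_cos_sq (κ * y)
          field_simp
          nlinarith [hs]
        have hfv : f y = Complex.normSq (ψ' y) - κ^2 * N y := rfl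
        have hBv : B' y = κ^2 / Real.cos (κ*y)^2 * N y + T y * R y := rfl
        rw [hfv, hBv, hexp, htansq]
        ring
      nlinarith [Complex.normSq_nonneg (ψ' y + (T y : ℂ) * ψ y), hid]
    have hTc : ContinuousOn T (Icc (-a) a) := by
      intro y hy
      apply ContinuousAt.continuousWithinAt
      apply ContinuousAt.mul continuousAt_const
      exact (Real.continuousAt_tan.2 (hcos y hy).ne').comp
        ((continuous_const.mul continuous_id).continuousAt)
    have hNc : ContinuousOn N (Icc (-a) a) :=
      Complex.continuous_normSq.comp_continuousOn (hcψ.mono hIcc)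
    have hRc : ContinuousOn R (Icc (-a) a) := by
      apply Complex.continuous_re.comp_continuousOn
      exact (((hc'.mono hIcc).mul
        ((Complex.continuous_conj.comp_continuousOn (hcψ.mono hIcc)))).add
        ((hcψ.mono hIcc).mul (Complex.continuous_conj.comp_continuousOn (hc'.mono hIcc))))
    have hB'c : ContinuousOn B' (Icc (-a) a) := by
      apply ContinuousOn.add
      · apply ContinuousOn.mul _ hNc
        apply ContinuousOn.div continuousOn_const
        · exact ((Real.continuous_cos.comp (continuous_const.mul continuous_id)).pow 2).continuousOn
        · exact fun y hy => pow_ne_zero 2 (hcos y hy).ne'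
      · exact hTc.mul hRc
    have hB'int : IntervalIntegrable B' volume (-a) a := by
      apply ContinuousOn.intervalIntegrable
      rwa [Set.uIcc_of_le haa]
    have hFTC : ∫ y in (-a)..a, B' y = B a - B (-a) :=
      integral_eq_sub_of_hasDerivAt
        (fun y hy => hBderiv y (by rwa [Set.uIcc_of_le haa] at hy)) hB'int
    have hmono : ∫ y in (-a)..a, (-B' y) ≤ ∫ y in (-a)..a, f y :=
      integral_mono_on haa hB'int.neg
        (hint (-a) a (hIcc ⟨le_refl _, haa⟩) (hIcc ⟨haa, le_refl _⟩)) hpt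
    have hmid : -(2*M^2*δ) ≤ ∫ y in (-a)..a, f y := by
      have hBd : B a - B (-a) ≤ 2*M^2*δ := by
        have hTodd : T (-a) = -T a := by
          rw [hTdef]; simp [Real.tan_neg, mul_neg]
        have hBsum : B a - B (-a) = T a * (N a + N (-a)) := by
          rw [hBdef]; simp only [hTodd]; ring
        have hTa0 : 0 ≤ T a := by
          apply mul_nonneg hκ.le
          rw [Real.tan_eq_sin_div_cos]
          apply div_nonneg _ (hcos a ⟨haa, le_refl _⟩).le
          apply Real.sin_nonneg_of_nonneg_of_le_pi (by positivity)
          nlinarith [hκb, Real.pi_pos]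
        have hκδ0 : 0 < κ * δ := by positivity
        have hκδ : κ * δ < Real.pi / 2 := by
          rw [← hκb]
          exact mul_lt_mul_of_pos_left hδb hκ
        have htanδ : κ * δ < Real.tan (κ * δ) := Real.lt_tan hκδ0 hκδ
        have hTa : T a ≤ 1/δ := by
          have he : κ * a = Real.pi / 2 - κ * δ := by
            rw [hadef]; rw [mul_sub, hκb]
          have : Real.tan (κ * a) = (Real.tan (κ * δ))⁻¹ := by
            rw [he, Real.tan_pi_div_two_sub]
          rw [hTdef]
          simp only [this]
          rw [div_eq_mul_inv, one_mul]
          calc κ * (Real.tan (κ * δ))⁻¹ ≤ κ * (κ * δ)⁻¹ := by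
                apply mul_le_mul_of_nonneg_left _ hκ.le
                exact inv_anti₀ hκδ0 htanδ.le
            _ = δ⁻¹ := by field_simp
        have hNa : N a ≤ M^2 * δ^2 := by
          have := hψbound a (hIcc ⟨haa, le_refl _⟩)
          rwa [_root_.abs_of_nonneg ha0.le, hadef, sub_sub_cancel] at this
        have hNna : N (-a) ≤ M^2 * δ^2 := by
          have := hψbound (-a) (hIcc ⟨le_refl _, haa⟩)
          rwa [abs_neg, _root_.abs_of_nonneg ha0.le, hadef, sub_sub_cancel] at this
        have hNn : 0 ≤ N a + N (-a) :=
          add_nonneg (Complex.normSq_nonneg _) (Complex.normSq_nonneg _)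
        calc B a - B (-a) = T a * (N a + N (-a)) := hBsum
          _ ≤ (1/δ) * (2 * (M^2 * δ^2)) := by
              apply mul_le_mul hTa (by linarith) hNn (by positivity)
          _ = 2*M^2*δ := by field_simp
      have h2 : ∫ y in (-a)..a, (-B' y) = -(B a - B (-a)) := by
        rw [intervalIntegral.integral_neg, hFTC]
      linarith [hmono, h2 ▸ hmono]
    have htail1 : -(C*δ) ≤ ∫ y in (-b)..(-a), f y := by
      have hn : ‖∫ y in (-b)..(-a), f y‖ ≤ C * |(-a) - (-b)| := by
        apply intervalIntegral.norm_integral_le_of_norm_le_const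
        intro x hx
        rw [Set.uIoc_of_le (by linarith : (-b) ≤ (-a))] at hx
        exact hC x ⟨hx.1.le, by linarith [hx.2]⟩
      rw [show |(-a) - (-b)| = δ by rw [hadef, _root_.abs_of_nonneg (by linarith)]; ring] at hn
      have := neg_abs_le (∫ y in (-b)..(-a), f y)
      rw [Real.norm_eq_abs] at hn
      linarith
    have htail2 : -(C*δ) ≤ ∫ y in a..b, f y := by
      have hn : ‖∫ y in a..b, f y‖ ≤ C * |b - a| := by
        apply intervalIntegral.norm_integral_le_of_norm_le_const
        intro x hx
        rw [Set.uIoc_of_le hab.le] at hx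
        exact hC x ⟨by linarith [hx.1], hx.2⟩
      rw [show |b - a| = δ by rw [hadef, _root_.abs_of_nonneg (by linarith)]; ring] at hn
      have := neg_abs_le (∫ y in a..b, f y)
      rw [Real.norm_eq_abs] at hn
      linarith
    have hsplit : ∫ y in (-b)..b, f y
        = (∫ y in (-b)..(-a), f y) + (∫ y in (-a)..a, f y) + (∫ y in a..b, f y) := by
      have hmem : ∀ x ∈ ({-b, -a, a, b} : Set ℝ), x ∈ Icc (-b) b := by
        intro x hx
        simp only [Set.mem_insert_iff, Set.mem_singleton_iff] at hx
        rcases hx with h | h | h | h <;> subst h <;>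
          constructor <;> first | linarith | exact le_refl _
      rw [integral_add_adjacent_intervals
          (hint (-b) (-a) ⟨le_refl _, by linarith⟩ ⟨by linarith, by linarith⟩)
          (hint (-a) a ⟨by linarith, by linarith⟩ ⟨by linarith, hab.le⟩),
        integral_add_adjacent_intervals
          ((hint (-b) (-a) ⟨le_refl _, by linarith⟩ ⟨by linarith, by linarith⟩).trans
            (hint (-a) a ⟨by linarith, by linarith⟩ ⟨by linarith, hab.le⟩))
          (hint a b ⟨by linarith, hab.le⟩ ⟨by linarith, le_refl _⟩)]
    rw [hsplit]
    linarith
  have hnn : 0 ≤ ∫ y in (-b)..b, f y := by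
    by_contra h
    push_neg at h
    have hpos : (0:ℝ) < 2*C + 2*M^2 + 1 := by positivity
    set δ : ℝ := min (b/2) ((-(∫ y in (-b)..b, f y))/(2*C + 2*M^2 + 1)) with hδdef
    have hδ0 : 0 < δ := lt_min (by linarith) (div_pos (by linarith) hpos)
    have hδb : δ < b := lt_of_le_of_lt (min_le_left _ _) (by linarith)
    have hkey := key δ hδ0 hδb
    have hδe : δ ≤ (-(∫ y in (-b)..b, f y))/(2*C + 2*M^2 + 1) := min_le_right _ _
    have hδe' : δ * (2*C + 2*M^2 + 1) ≤ -(∫ y in (-b)..b, f y) := (le_div_iff₀ hpos).1 hδe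
    nlinarith [hkey, hδe', hδ0, hC0, hM0]
  have hi1 : IntervalIntegrable (fun y => Complex.normSq (ψ' y)) volume (-b) b := by
    apply ContinuousOn.intervalIntegrable
    rw [Set.uIcc_of_le (by linarith : (-b) ≤ b)]
    exact Complex.continuous_normSq.comp_continuousOn hc'
  have hi2 : IntervalIntegrable (fun y => κ^2 * Complex.normSq (ψ y)) volume (-b) b := by
    apply ContinuousOn.intervalIntegrable
    rw [Set.uIcc_of_le (by linarith : (-b) ≤ b)]
    exact continuousOn_const.mul (Complex.continuous_normSq.comp_continuousOn hcψ)
  have := intervalIntegral.integral_sub hi1 hi2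
  rw [hfdef] at hnn
  rw [intervalIntegral.integral_sub hi1 hi2, intervalIntegral.integral_const_mul] at hnn
  linarith

set_option maxHeartbeats 1000000 in
open MeasureTheory intervalIntegral in
/-- Inequality (aint) of Appendix A: for any unstable mode (with `c_r = Re c`) and any
real `α`, `∫ q (U − 2c_r + α)/|U − c|² |ψ|² = ∫ (|ψ'|² + (k² + 1/L_d²)|ψ|²)
≥ (κ₀² + k²) ∫ |ψ|²`, where `κ₀² = π²/L² + 1/L_d²`. -/
theorem integral_inequality_aint
    (L Ld : ℝ) (hL : 0 < L) (hLd : 0 < Ld)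
    (U q : ℝ → ℝ)
    (hU : ContDiffOn ℝ 1 U (Icc (-L/2) (L/2)))
    (hq : ContDiffOn ℝ 1 q (Icc (-L/2) (L/2)))
    (k : ℝ) (hk : 0 ≤ k) (c : ℂ) (ψ ψ' ψ'' : ℝ → ℂ)
    (hmode : IsUnstableMode L Ld k U q c ψ ψ' ψ'') :
    ∀ α : ℝ,
      (∫ y in (-L/2)..(L/2),
          q y * (U y - 2 * c.re + α) / Complex.normSq ((U y : ℂ) - c) * Complex.normSq (ψ y))
        = (∫ y in (-L/2)..(L/2),
            Complex.normSq (ψ' y) + (k^2 + 1/Ld^2) * Complex.normSq (ψ y)) ∧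
      ((Real.pi^2/L^2 + 1/Ld^2) + k^2) * (∫ y in (-L/2)..(L/2), Complex.normSq (ψ y))
        ≤ ∫ y in (-L/2)..(L/2),
            Complex.normSq (ψ' y) + (k^2 + 1/Ld^2) * Complex.normSq (ψ y) := by
  obtain ⟨hcim, hdψ, hdψ', hcψ'', hne, hbd0, hbd1, hode⟩ := hmode
  intro α
  have hab : (-L/2 : ℝ) ≤ L/2 := by linarith
  have huIcc : Set.uIcc (-L/2 : ℝ) (L/2) = Icc (-L/2) (L/2) := Set.uIcc_of_le hab
  have hcψ : ContinuousOn ψ (Icc (-L/2) (L/2)) := fun y hy =>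
    (hdψ y hy).continuousAt.continuousWithinAt
  have hcψ' : ContinuousOn ψ' (Icc (-L/2) (L/2)) := fun y hy =>
    (hdψ' y hy).continuousAt.continuousWithinAt
  have hUc : ContinuousOn U (Icc (-L/2) (L/2)) := hU.continuousOn
  have hqc : ContinuousOn q (Icc (-L/2) (L/2)) := hq.continuousOn
  have hUcne : ∀ y : ℝ, ((U y : ℂ) - c) ≠ 0 := by
    intro y h
    apply hcim
    have := congrArg Complex.im h
    simpa using this.symm
  have hnsqpos : ∀ y : ℝ, 0 < Complex.normSq ((U y : ℂ) - c) :=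
    fun y => Complex.normSq_pos.2 (hUcne y)
  -- integrability helpers
  have hiOn : ∀ F : ℝ → ℝ, ContinuousOn F (Icc (-L/2) (L/2)) →
      IntervalIntegrable F volume (-L/2) (L/2) := by
    intro F hF
    exact (huIcc ▸ hF : ContinuousOn F (Set.uIcc (-L/2 : ℝ) (L/2))).intervalIntegrable
  have hiOnC : ∀ F : ℝ → ℂ, ContinuousOn F (Icc (-L/2) (L/2)) →
      IntervalIntegrable F volume (-L/2) (L/2) := by
    intro F hF
    exact (huIcc ▸ hF : ContinuousOn F (Set.uIcc (-L/2 : ℝ) (L/2))).intervalIntegrable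
  have hnsqψc : ContinuousOn (fun y => Complex.normSq (ψ y)) (Icc (-L/2) (L/2)) :=
    Complex.continuous_normSq.comp_continuousOn hcψ
  have hnsqψ'c : ContinuousOn (fun y => Complex.normSq (ψ' y)) (Icc (-L/2) (L/2)) :=
    Complex.continuous_normSq.comp_continuousOn hcψ'
  set Iψ : ℝ := ∫ y in (-L/2)..(L/2), Complex.normSq (ψ y) with hIψdef
  set Iψ' : ℝ := ∫ y in (-L/2)..(L/2), Complex.normSq (ψ' y) with hIψ'def
  -- integration by parts
  have hibp : ∫ y in (-L/2)..(L/2), ψ'' y * (starRingEnd ℂ) (ψ y)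
      = - ∫ y in (-L/2)..(L/2), ψ' y * (starRingEnd ℂ) (ψ' y) := by
    have hconjd : ∀ y ∈ Set.uIcc (-L/2 : ℝ) (L/2),
        HasDerivAt (fun x => (starRingEnd ℂ) (ψ x)) ((starRingEnd ℂ) (ψ' y)) y := by
      intro y hy
      simpa using (hdψ y (huIcc ▸ hy)).star
    have h := intervalIntegral.integral_mul_deriv_eq_deriv_mul
      (u := ψ') (v := fun x => (starRingEnd ℂ) (ψ x)) (u' := ψ'')
      (v' := fun y => (starRingEnd ℂ) (ψ' y))
      (fun x hx => hdψ' x (huIcc ▸ hx)) hconjd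
      (hiOnC _ hcψ'')
      (hiOnC _ (Complex.continuous_conj.comp_continuousOn hcψ'))
    simp only [hbd0, hbd1, map_zero, mul_zero, zero_sub, zero_mul, sub_zero, neg_zero,
      zero_add] at h
    linear_combination h
  set K : ℝ := k^2 + 1/Ld^2 with hKdef
  set F : ℝ → ℂ := fun y => (q y : ℂ) / ((U y : ℂ) - c) * ((Complex.normSq (ψ y) : ℝ) : ℂ)
    with hFdef
  have hFc : ContinuousOn F (Icc (-L/2) (L/2)) := by
    apply ContinuousOn.mul
    · exact ((Complex.continuous_ofReal.comp_continuousOn hqc).div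
        ((Complex.continuous_ofReal.comp_continuousOn hUc).sub continuousOn_const)
        (fun y hy => hUcne y))
    · exact Complex.continuous_ofReal.comp_continuousOn hnsqψc
  have hFint : IntervalIntegrable F volume (-L/2) (L/2) := hiOnC _ hFc
  -- the complex integral identity
  have hmain : ∫ y in (-L/2)..(L/2), F y = ((K : ℝ) : ℂ) * (Iψ : ℂ) + (Iψ' : ℂ) := by
    have hpt : ∀ y ∈ Set.uIcc (-L/2 : ℝ) (L/2),
        F y = ((K : ℝ) : ℂ) * ((Complex.normSq (ψ y) : ℝ) : ℂ)
          - ψ'' y * (starRingEnd ℂ) (ψ y) := by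
      intro y hy
      have h := hode y (huIcc ▸ hy)
      have hmc := Complex.mul_conj (ψ y)
      rw [hFdef]
      simp only
      rw [hKdef]
      linear_combination ((starRingEnd ℂ) (ψ y)) * h
        + (((k^2 + 1/Ld^2 : ℝ) : ℂ) - (q y : ℂ)/((U y : ℂ) - c)) * hmc
    rw [intervalIntegral.integral_congr hpt]
    have hi1 : IntervalIntegrable (fun y => ((K : ℝ) : ℂ) * ((Complex.normSq (ψ y) : ℝ) : ℂ))
        volume (-L/2) (L/2) :=
      (hiOnC _ (Complex.continuous_ofReal.comp_continuousOn hnsqψc)).const_mul _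
    have hi2 : IntervalIntegrable (fun y => ψ'' y * (starRingEnd ℂ) (ψ y)) volume (-L/2) (L/2) :=
      hiOnC _ (hcψ''.mul (Complex.continuous_conj.comp_continuousOn hcψ))
    rw [intervalIntegral.integral_sub hi1 hi2, intervalIntegral.integral_const_mul, hibp]
    have he1 : ∫ y in (-L/2)..(L/2), ((Complex.normSq (ψ y) : ℝ) : ℂ) = ((Iψ : ℝ) : ℂ) := by
      rw [hIψdef]; exact intervalIntegral.integral_ofReal
    have he2 : ∫ y in (-L/2)..(L/2), ψ' y * (starRingEnd ℂ) (ψ' y) = ((Iψ' : ℝ) : ℂ) := by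
      simp only [Complex.mul_conj]
      rw [hIψ'def]; exact intervalIntegral.integral_ofReal
    rw [he1, he2]
    ring
  -- real part
  have hre : ∀ y : ℝ, (F y).re
      = q y * Complex.normSq (ψ y) * (U y - c.re) / Complex.normSq ((U y : ℂ) - c) := by
    intro y
    have hFy : F y = ((q y * Complex.normSq (ψ y) : ℝ) : ℂ) / ((U y : ℂ) - c) := by
      rw [hFdef]
      push_cast
      ring
    rw [hFy, Complex.div_re]
    simp [Complex.sub_re, Complex.sub_im, Complex.ofReal_re, Complex.ofReal_im]
    try ring
  -- imaginary part
  have him : ∀ y : ℝ, (F y).im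
      = q y * Complex.normSq (ψ y) * c.im / Complex.normSq ((U y : ℂ) - c) := by
    intro y
    have hFy : F y = ((q y * Complex.normSq (ψ y) : ℝ) : ℂ) / ((U y : ℂ) - c) := by
      rw [hFdef]
      push_cast
      ring
    rw [hFy, Complex.div_im]
    simp [Complex.sub_re, Complex.sub_im, Complex.ofReal_re, Complex.ofReal_im]
    try ring
  have hcompre := Complex.reCLM.intervalIntegral_comp_comm hFint
  have hcompim := Complex.imCLM.intervalIntegral_comp_comm hFint
  rw [hmain] at hcompre hcompim
  have hRe : ∫ y in (-L/2)..(L/2),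
      q y * Complex.normSq (ψ y) * (U y - c.re) / Complex.normSq ((U y : ℂ) - c)
      = K * Iψ + Iψ' := by
    have h1 : (fun y => q y * Complex.normSq (ψ y) * (U y - c.re)
        / Complex.normSq ((U y : ℂ) - c)) = fun y => Complex.reCLM (F y) := by
      funext y
      simp [← hre y]
    rw [h1, hcompre]
    simp
  have hIm : ∫ y in (-L/2)..(L/2),
      q y * Complex.normSq (ψ y) * c.im / Complex.normSq ((U y : ℂ) - c) = 0 := by
    have h1 : (fun y => q y * Complex.normSq (ψ y) * c.im
        / Complex.normSq ((U y : ℂ) - c)) = fun y => Complex.imCLM (F y) := by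
      funext y
      simp [← him y]
    rw [h1, hcompim]
    simp
  -- from hIm: ∫ g = 0 with g y = q y * normSq (ψ y) / normSq (U y - c)
  have hg0 : ∫ y in (-L/2)..(L/2),
      q y * Complex.normSq (ψ y) / Complex.normSq ((U y : ℂ) - c) = 0 := by
    have h1 : (fun y => q y * Complex.normSq (ψ y) * c.im / Complex.normSq ((U y : ℂ) - c))
        = fun y => c.im * (q y * Complex.normSq (ψ y) / Complex.normSq ((U y : ℂ) - c)) := by
      funext y
      ring
    rw [h1, intervalIntegral.integral_const_mul] at hIm
    exact (mul_eq_zero.1 hIm).resolve_left hcim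
  -- continuity of the real integrands
  have hgc : ContinuousOn
      (fun y => q y * Complex.normSq (ψ y) / Complex.normSq ((U y : ℂ) - c))
      (Icc (-L/2) (L/2)) := by
    apply ContinuousOn.div (hqc.mul hnsqψc)
    · exact Complex.continuous_normSq.comp_continuousOn
        ((Complex.continuous_ofReal.comp_continuousOn hUc).sub continuousOn_const)
    · exact fun y hy => (hnsqpos y).ne'
  have hg1c : ContinuousOn
      (fun y => q y * Complex.normSq (ψ y) * (U y - c.re) / Complex.normSq ((U y : ℂ) - c))
      (Icc (-L/2) (L/2)) := by
    apply ContinuousOn.div ((hqc.mul hnsqψc).mul (hUc.sub continuousOn_const))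
    · exact Complex.continuous_normSq.comp_continuousOn
        ((Complex.continuous_ofReal.comp_continuousOn hUc).sub continuousOn_const)
    · exact fun y hy => (hnsqpos y).ne'
  -- RHS of the equality
  have hRHS : ∫ y in (-L/2)..(L/2),
      (Complex.normSq (ψ' y) + (k^2 + 1/Ld^2) * Complex.normSq (ψ y)) = Iψ' + K * Iψ := by
    rw [intervalIntegral.integral_add (hiOn _ hnsqψ'c) ((hiOn _ hnsqψc).const_mul _),
      intervalIntegral.integral_const_mul, hIψdef, hIψ'def]
  constructor
  · -- the equality
    have hpt : ∀ y ∈ Set.uIcc (-L/2 : ℝ) (L/2),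
        q y * (U y - 2 * c.re + α) / Complex.normSq ((U y : ℂ) - c) * Complex.normSq (ψ y)
        = q y * Complex.normSq (ψ y) * (U y - c.re) / Complex.normSq ((U y : ℂ) - c)
          + (α - c.re) * (q y * Complex.normSq (ψ y) / Complex.normSq ((U y : ℂ) - c)) := by
      intro y _
      field_simp
      ring
    rw [intervalIntegral.integral_congr hpt,
      intervalIntegral.integral_add (hiOn _ hg1c) ((hiOn _ hgc).const_mul _),
      intervalIntegral.integral_const_mul, hRe, hg0, hRHS]
    ring
  · -- the inequality
    rw [hRHS]
    have hEa : (-(L/2) : ℝ) = -L/2 := by ring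
    have hw := wirtinger_aux (L/2) (by linarith) ψ ψ'
      (by rw [hEa]; exact hdψ) (by rw [hEa]; exact hcψ')
      (by rw [hEa]; exact hbd0) hbd1
    rw [hEa] at hw
    have hco : (Real.pi / (2*(L/2)))^2 = Real.pi^2/L^2 := by
      rw [show (2*(L/2) : ℝ) = L by ring, div_pow]
    rw [hco] at hw
    have hIψnn : 0 ≤ Iψ := by
      rw [hIψdef]
      exact intervalIntegral.integral_nonneg hab (fun u _ => Complex.normSq_nonneg _)
    have hexp : ((Real.pi^2/L^2 + 1/Ld^2) + k^2) * Iψ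
        = Real.pi^2/L^2 * Iψ + K * Iψ := by rw [hKdef]; ring
    rw [hexp]
    have : Real.pi^2/L^2 * Iψ ≤ Iψ' := hw
    linarith
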